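/- Let β = (β_0,...,β_{2k}) ∈ ℝ^{2k+1} with A_β positive semidefinite, β̃ = (β_0,...,β_{2k-2}), and r = rank β̃. If A_β(r-1) is invertible and (φ_0,...,φ_{r-1})^T := A_β(r-1)^{-1} (β_r,...,β_{2r-1})^T, then rank A_β = r if and only if β_{2k} = φ_0 β_{2k-r} + ... + φ_{r-1} β_{2k-1}. -/

import Mathlib

open Matrix

/-- The (k+1)×(k+1) Hankel matrix of a sequence β = (β₀,...,β₂ₖ). -/
def hankel {k : ℕ} (β : Fin (2*k+1) → ℝ) : Matrix (Fin (k+1)) (Fin (k+1)) ℝ :=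
  fun i j => β ⟨i.1 + j.1, by have := i.2; have := j.2; omega⟩

/-- The leading principal (j+1)×(j+1) submatrix A(j) of a (k+1)×(k+1) matrix, j ≤ k. -/
def leadSub {k : ℕ} (A : Matrix (Fin (k+1)) (Fin (k+1)) ℝ) (j : ℕ) (h : j ≤ k) :
    Matrix (Fin (j+1)) (Fin (j+1)) ℝ :=
  A.submatrix (Fin.castLE (by omega)) (Fin.castLE (by omega))

/-- The leading principal r×r submatrix of a (k+1)×(k+1) matrix, r ≤ k+1. -/
def leadSq {k : ℕ} (A : Matrix (Fin (k+1)) (Fin (k+1)) ℝ) (r : ℕ) (h : r ≤ k+1) :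
    Matrix (Fin r) (Fin r) ℝ :=
  A.submatrix (Fin.castLE h) (Fin.castLE h)

/-- The rank of a sequence via its Hankel matrix: k+1 if the matrix is nonsingular, and
otherwise the least index i whose column lies in the span of the preceding columns. -/
noncomputable def hankelRank {k : ℕ} (A : Matrix (Fin (k+1)) (Fin (k+1)) ℝ) : ℕ :=
  if A.det ≠ 0 then k+1
  else sInf {i : ℕ | ∃ h : i < k+1,
    (fun r => A r ⟨i, h⟩) ∈ Submodule.span ℝ
      {c : Fin (k+1) → ℝ | ∃ j : Fin (k+1), j.1 < i ∧ c = fun r => A r j}}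

/-- The truncation (β₀,...,β₂₍ₖ₋₁₎) of (β₀,...,β₂ₖ). -/
def trunc {k : ℕ} (β : Fin (2*k+1) → ℝ) : Fin (2*(k-1)+1) → ℝ :=
  fun i => β ⟨i.1, by have := i.2; omega⟩


lemma hankelRank_spec {K : ℕ} (A : Matrix (Fin (K+1)) (Fin (K+1)) ℝ) {r : ℕ}
    (hr : r = hankelRank A) (hr1 : 1 ≤ r) (hrK : r < K+1) :
    ∃ ψ : Fin r → ℝ, ∀ i : Fin (K+1),
      ∑ j : Fin r, ψ j * A i ⟨j.1, by have := j.2; omega⟩ = A i ⟨r, hrK⟩ := by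
  by_cases hd : A.det ≠ 0
  · simp only [hankelRank, if_pos hd] at hr
    omega
  · simp only [hankelRank, if_neg hd] at hr
    have hSne : {i : ℕ | ∃ h : i < K+1,
        (fun s => A s ⟨i, h⟩) ∈ Submodule.span ℝ
          {c : Fin (K+1) → ℝ | ∃ j : Fin (K+1), j.1 < i ∧ c = fun s => A s j}}.Nonempty := by
      by_contra h
      rw [Set.not_nonempty_iff_eq_empty] at h
      rw [h, Nat.sInf_empty] at hr
      omega
    have hrS := Nat.sInf_mem hSne
    rw [← hr] at hrS
    obtain ⟨hrK', hmem⟩ := hrS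
    have hset : {c : Fin (K+1) → ℝ | ∃ j : Fin (K+1), j.1 < r ∧ c = fun s => A s j}
        = Set.range (fun j : Fin r => fun s : Fin (K+1) => A s ⟨j.1, by have := j.2; omega⟩) := by
      ext c
      constructor
      · rintro ⟨j, hj, rfl⟩
        exact ⟨⟨j.1, hj⟩, rfl⟩
      · rintro ⟨j, rfl⟩
        exact ⟨⟨j.1, by have := j.2; omega⟩, j.2, rfl⟩
    rw [hset, Submodule.mem_span_range_iff_exists_fun ℝ] at hmem
    obtain ⟨ψ, hψ⟩ := hmem
    refine ⟨ψ, fun i => ?_⟩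
    have h2 := congrFun hψ i
    simp only [Finset.sum_apply, Pi.smul_apply, smul_eq_mul] at h2
    exact h2

lemma sum_ite_fin {k : ℕ} (f : Fin (k+1) → ℝ) {m : ℕ} (hm : m < k+1) :
    ∑ j : Fin (k+1), (if j.1 = m then f j else 0) = f ⟨m, hm⟩ := by
  rw [Finset.sum_eq_single (⟨m, hm⟩ : Fin (k+1))]
  · simp
  · intro j _ hj; rw [if_neg]; exact fun h => hj (Fin.ext h)
  · simp

def uvec (k r m : ℕ) (φ : Fin r → ℝ) : Fin (k+1) → ℝ :=
  fun j => (if j.1 = m then 1 else 0) - ∑ i : Fin r, if j.1 = m - r + i.1 then φ i else 0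

lemma mulVec_uvec {k r : ℕ} (b : ℕ → ℝ) (A : Matrix (Fin (k+1)) (Fin (k+1)) ℝ)
    (hA : ∀ i j, A i j = b (i.1 + j.1)) (φ : Fin r → ℝ) {m : ℕ} (hrm : r ≤ m) (hmk : m ≤ k)
    (s : Fin (k+1)) :
    (A *ᵥ uvec k r m φ) s = b (s.1 + m) - ∑ i : Fin r, φ i * b (s.1 + m - r + i.1) := by
  have h1 : (A *ᵥ uvec k r m φ) s
      = ∑ j : Fin (k+1), (A s j * (if j.1 = m then 1 else 0)
          - ∑ i : Fin r, (if j.1 = m - r + i.1 then A s j * φ i else 0)) := by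
    simp only [mulVec, dotProduct, uvec, mul_sub, Finset.mul_sum, mul_ite, mul_zero]
  rw [h1, Finset.sum_sub_distrib]
  congr 1
  · have : ∀ j : Fin (k+1), A s j * (if j.1 = m then 1 else 0)
        = (if j.1 = m then A s j else 0) := by intro j; split <;> simp
    simp only [this]
    rw [sum_ite_fin (fun j => A s j) (by omega)]
    rw [hA]
  · rw [Finset.sum_comm]
    refine Finset.sum_congr rfl fun i _ => ?_
    rw [sum_ite_fin (fun j => A s j * φ i) (by omega), hA]
    have : s.1 + (m - r + i.1) = s.1 + m - r + i.1 := by omega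
    rw [this, mul_comm]

theorem stmt9 {k : ℕ} (hk : 1 ≤ k) (β : Fin (2*k+1) → ℝ) (hpsd : (hankel β).PosSemidef)
    (r : ℕ) (hr : r = hankelRank (hankel (trunc β))) (hr1 : 1 ≤ r) (hrk : r ≤ k)
    (hinv : (leadSq (hankel β) r (by omega)).det ≠ 0)
    (φ : Fin r → ℝ)
    (hφ : φ = (leadSq (hankel β) r (by omega))⁻¹ *ᵥ
      (fun i : Fin r => β ⟨r + i.1, by have := i.2; omega⟩)) :
    (hankel β).rank = r ↔
      β ⟨2*k, by omega⟩ = ∑ i : Fin r, φ i * β ⟨2*k - r + i.1, by have := i.2; omega⟩ := by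
  obtain ⟨k, rfl⟩ : ∃ n, k = n + 1 := ⟨k - 1, by omega⟩

  -- the sequence as a function on ℕ
  set b : ℕ → ℝ := fun t => if h : t < 2*(k+1)+1 then β ⟨t, h⟩ else 0 with hbdef
  have hb : ∀ t (h : t < 2*(k+1)+1), b t = β ⟨t, h⟩ := fun t h => dif_pos h
  have hA : ∀ i j : Fin (k+1+1), hankel β i j = b (i.1 + j.1) := by
    intro i j; rw [hb _ (by omega)]; rfl
  -- the leading r×r block
  have hrk2 : r ≤ (k+1)+1 := by omega
  set B : Matrix (Fin r) (Fin r) ℝ := leadSq (hankel β) r hrk2 with hBdef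
  have hB : ∀ s t : Fin r, B s t = b (s.1 + t.1) := by
    intro s t; exact hA _ _
  have hBdet : IsUnit B.det := isUnit_iff_ne_zero.mpr hinv
  have hφ' : φ = B⁻¹ *ᵥ (fun i : Fin r => b (r + i.1)) := by
    rw [hφ]
    exact congrArg (fun v => B⁻¹ *ᵥ v)
      (funext fun i => (hb (r + i.1) (by have := i.2; omega)).symm)
  have hφc : B *ᵥ φ = fun i : Fin r => b (r + i.1) := by
    rw [hφ', mulVec_mulVec, mul_nonsing_inv _ hBdet, one_mulVec]
  -- the defect function
  set g : ℕ → ℝ := fun t => b (t + r) - ∑ i : Fin r, φ i * b (t + i.1) with hgdef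
  have hg0 : ∀ t, t < r → g t = 0 := by
    intro t ht
    have h1 := congrFun hφc ⟨t, ht⟩
    simp only [mulVec, dotProduct] at h1
    simp only [hgdef, sub_eq_zero]
    calc b (t + r) = b (r + t) := by rw [Nat.add_comm]
    _ = ∑ i : Fin r, B ⟨t, ht⟩ i * φ i := h1.symm
    _ = ∑ i : Fin r, φ i * b (t + i.1) := by
        refine Finset.sum_congr rfl fun i _ => ?_
        rw [hB, mul_comm]
  have hAt : ∀ i j : Fin (k+1), hankel (trunc β) i j = b (i.1 + j.1) := by
    intro i j; rw [hb _ (by have := i.2; have := j.2; omega)]; rfl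
  have hgbase : ∀ t, t ≤ k → g t = 0 := by
    rcases Nat.lt_or_ge r (k+1) with hrlt | hrge
    swap
    · exact fun t ht => hg0 t (by omega)
    · obtain ⟨ψ, hψ⟩ := hankelRank_spec (hankel (trunc β)) hr hr1 hrlt
      have hψ' : ∀ i : Fin (k+1), ∑ j : Fin r, ψ j * b (i.1 + j.1) = b (i.1 + r) := by
        intro i
        have h2 := hψ i
        calc ∑ j : Fin r, ψ j * b (i.1 + j.1)
            = ∑ j : Fin r, ψ j * hankel (trunc β) i ⟨j.1, by have := j.2; omega⟩ := by
              refine Finset.sum_congr rfl fun j _ => ?_; rw [hAt]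
          _ = hankel (trunc β) i ⟨r, hrlt⟩ := h2
          _ = b (i.1 + r) := hAt _ _
      have hBψ : B *ᵥ ψ = fun i : Fin r => b (r + i.1) := by
        funext s
        simp only [mulVec, dotProduct]
        calc ∑ j : Fin r, B s j * ψ j = ∑ j : Fin r, ψ j * b (s.1 + j.1) := by
              refine Finset.sum_congr rfl fun j _ => ?_; rw [hB, mul_comm]
          _ = b (s.1 + r) := hψ' ⟨s.1, by omega⟩
          _ = b (r + s.1) := by rw [Nat.add_comm]
      have hψφ : ψ = φ := by
        have h2 : B⁻¹ *ᵥ (B *ᵥ ψ) = ψ := by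
          rw [mulVec_mulVec, nonsing_inv_mul _ hBdet, one_mulVec]
        rw [hBψ] at h2
        rw [← h2, hφ']
      intro t ht
      have h3 := hψ' ⟨t, by omega⟩
      rw [hψφ] at h3
      simp only [hgdef, sub_eq_zero]
      exact h3.symm
  have hgall : ∀ t, t ≤ 2*k+1-r → g t = 0 := by
    intro t
    induction t using Nat.strong_induction_on with
    | _ t ih =>
      intro ht
      rcases le_or_gt t k with h | h
      · exact hgbase t h
      · have hm1 : r ≤ t - (k+1) + r := by omega
        have hm2 : t - (k+1) + r ≤ k := by omega
        set m := t - (k+1) + r with hmdef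
        set u := uvec (k+1) r m φ with hudef
        have hmu : ∀ s : Fin (k+1+1), (hankel β *ᵥ u) s = g (s.1 + m - r) := by
          intro s
          rw [hudef, mulVec_uvec b (hankel β) hA φ hm1 (by omega)]
          simp only [hgdef]
          rw [show s.1 + m - r + r = s.1 + m from by omega]
        have hdot : star u ⬝ᵥ (hankel β *ᵥ u) = 0 := by
          rw [star_trivial]
          simp only [dotProduct]
          apply Finset.sum_eq_zero
          intro s _
          rcases le_or_gt s.1 k with hs | hs
          · rw [hmu s, ih (s.1 + m - r) (by omega) (by omega), mul_zero]
          · have hu0 : u s = 0 := by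
              rw [hudef]
              simp only [uvec]
              rw [if_neg (by omega)]
              rw [Finset.sum_eq_zero (fun i _ => if_neg (by have := i.2; omega))]
              simp
            rw [hu0, zero_mul]
        have hAu : hankel β *ᵥ u = 0 := (hpsd.dotProduct_mulVec_zero_iff u).mp hdot
        have h4 := hmu ⟨k+1, by omega⟩
        rw [hAu] at h4
        simp only [Pi.zero_apply] at h4
        have h5 : g (k+1+m-r) = 0 := h4.symm
        rw [show k+1+m-r = t from by omega] at h5
        exact h5
  have hrel : ∀ m, r ≤ m → m ≤ k+1 → g (k+1+m-r) = 0 →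
      ∀ s : Fin (k+1+1), b (s.1 + m) = ∑ i : Fin r, φ i * b (s.1 + (m - r + i.1)) := by
    intro m hm1 hm2 hm3 s
    have h3 : g (s.1 + m - r) = 0 := by
      rcases le_or_gt s.1 k with hs | hs
      · exact hgall (s.1 + m - r) (by omega)
      · have hsk : s.1 = k+1 := by have := s.2; omega
        rw [show s.1 + m - r = k+1+m-r from by omega]
        exact hm3
    simp only [hgdef, sub_eq_zero] at h3
    calc b (s.1 + m) = b (s.1 + m - r + r) := by
          rw [show s.1 + m - r + r = s.1 + m from by omega]
      _ = ∑ i : Fin r, φ i * b (s.1 + m - r + i.1) := h3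
      _ = ∑ i : Fin r, φ i * b (s.1 + (m - r + i.1)) := by
          refine Finset.sum_congr rfl fun i _ => ?_
          rw [show s.1 + m - r + i.1 = s.1 + (m - r + i.1) from by omega]
  set col : ℕ → (Fin (k+1+1) → ℝ) := fun m => fun i => b (i.1 + m) with hcoldef
  set W := Submodule.span ℝ (Set.range (fun j : Fin r => col j.1)) with hWdef
  set V := Submodule.span ℝ (Set.range (fun j : Fin (k+1+1) => col j.1)) with hVdef
  have hcolW : ∀ m, m ≤ k+1 → (m = k+1 → g (2*(k+1)-r) = 0) → col m ∈ W := by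
    intro m
    induction m using Nat.strong_induction_on with
    | _ m ih =>
      intro hmk hGc
      rcases Nat.lt_or_ge m r with hmr | hmr
      · exact Submodule.subset_span ⟨⟨m, hmr⟩, rfl⟩
      · have hg4 : g (k+1+m-r) = 0 := by
          rcases Nat.lt_or_ge m (k+1) with h5 | h5
          · exact hgall _ (by omega)
          · have h6 : m = k+1 := by omega
            rw [show k+1+m-r = 2*(k+1)-r from by omega]
            exact hGc h6
        have hrelm := hrel m hmr hmk hg4
        have hceq : col m = ∑ i : Fin r, φ i • col (m - r + i.1) := by
          funext s
          rw [Finset.sum_apply]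
          simp only [Pi.smul_apply, smul_eq_mul]
          exact hrelm s
        rw [hceq]
        refine Submodule.sum_mem _ fun i _ => Submodule.smul_mem _ _ ?_
        exact ih (m - r + i.1) (by have := i.2; omega) (by omega)
          (fun hc => absurd hc (by have := i.2; omega))
  have hAT : (hankel β)ᵀ = fun j : Fin (k+1+1) => col j.1 := by
    funext j i
    rw [transpose_apply, hA]
  have hrankV : (hankel β).rank = Module.finrank ℝ V := by
    rw [rank_eq_finrank_span_cols, show (hankel β).col = (hankel β)ᵀ from rfl, hAT, hVdef]
  have hind : LinearIndependent ℝ (fun j : Fin r => col j.1) := by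
    apply LinearIndependent.of_comp
      (LinearMap.funLeft ℝ ℝ (fun s : Fin r => (⟨s.1, by have := s.2; omega⟩ : Fin (k+1+1))))
    rw [Fintype.linearIndependent_iff]
    intro c hc
    have hc2 : B *ᵥ c = 0 := by
      funext s
      have h5 := congrFun hc s
      simp only [Function.comp_apply, LinearMap.funLeft_apply, Finset.sum_apply, Pi.smul_apply,
        smul_eq_mul, Pi.zero_apply] at h5
      have h6 : ∑ j : Fin r, B s j * c j = 0 := by
        rw [← h5]
        refine Finset.sum_congr rfl fun j _ => ?_
        rw [hB, mul_comm]
      simpa [mulVec, dotProduct] using h6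
    have hc0 : c = 0 := by
      have h2 : B⁻¹ *ᵥ (B *ᵥ c) = c := by
        rw [mulVec_mulVec, nonsing_inv_mul _ hBdet, one_mulVec]
      rw [hc2, mulVec_zero] at h2
      exact h2.symm
    intro j
    rw [hc0]
    rfl
  have hfinW : Module.finrank ℝ W = r := by
    rw [hWdef, finrank_span_eq_card hind, Fintype.card_fin]
  have hWleV : W ≤ V := by
    rw [hWdef, hVdef]
    apply Submodule.span_mono
    rintro x ⟨j, rfl⟩
    exact ⟨⟨j.1, by have := j.2; omega⟩, rfl⟩
  suffices hmain : (hankel β).rank = r ↔ g (2*(k+1)-r) = 0 by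
    rw [hmain]
    have hgeq : g (2*(k+1)-r) = β ⟨2*(k+1), by omega⟩
        - ∑ i : Fin r, φ i * β ⟨2*(k+1) - r + i.1, by have := i.2; omega⟩ := by
      simp only [hgdef]
      rw [show 2*(k+1)-r+r = 2*(k+1) from by omega]
      refine congrArg₂ (fun x y => x - y) (hb _ (by omega)) ?_
      exact Finset.sum_congr rfl fun i _ => by rw [hb _ (by have := i.2; omega)]
    rw [hgeq, sub_eq_zero]
  constructor
  · intro hrank
    have hVW : W = V := by
      apply Submodule.eq_of_le_of_finrank_le hWleV
      rw [hfinW, ← hrankV]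
      exact le_of_eq hrank
    have hcolk1 : col (k+1) ∈ W := by
      rw [hVW]
      exact Submodule.subset_span ⟨⟨k+1, by omega⟩, rfl⟩
    have hD : (col (k+1) - ∑ i : Fin r, φ i • col (k+1 - r + i.1)) ∈ W := by
      refine Submodule.sub_mem _ hcolk1 (Submodule.sum_mem _ fun i _ => Submodule.smul_mem _ _ ?_)
      exact hcolW (k+1-r+i.1) (by have := i.2; omega) (fun hc => absurd hc (by have := i.2; omega))
    have hDval : ∀ s : Fin (k+1+1),
        (col (k+1) - ∑ i : Fin r, φ i • col (k+1 - r + i.1)) s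
          = (if s.1 = k+1 then g (2*(k+1)-r) else 0) := by
      intro s
      simp only [Pi.sub_apply, Finset.sum_apply, Pi.smul_apply, smul_eq_mul, hcoldef]
      have e1 : b (s.1 + (k+1)) - ∑ i : Fin r, φ i * b (s.1 + (k+1-r+i.1)) = g (s.1+(k+1)-r) := by
        simp only [hgdef]
        congr 1
        · rw [show s.1+(k+1)-r+r = s.1 + (k+1) from by omega]
        · refine Finset.sum_congr rfl fun i _ => ?_
          rw [show s.1 + (k+1-r+i.1) = s.1+(k+1)-r+i.1 from by omega]
      rw [e1]
      by_cases hs : s.1 = k+1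
      · rw [if_pos hs, show s.1+(k+1)-r = 2*(k+1)-r from by omega]
      · rw [if_neg hs]
        exact hgall _ (by have := s.2; omega)
    rw [hWdef] at hD
    obtain ⟨d, hd⟩ := (Submodule.mem_span_range_iff_exists_fun ℝ).mp hD
    have hd2 : B *ᵥ d = 0 := by
      funext s
      have h5 := congrFun hd ⟨s.1, by have := s.2; omega⟩
      rw [hDval ⟨s.1, by have := s.2; omega⟩] at h5
      simp only [Fin.val_mk] at h5
      rw [if_neg (show ¬ s.1 = k+1 from by have := s.2; omega)] at h5
      simp only [Finset.sum_apply, Pi.smul_apply, smul_eq_mul] at h5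
      have h6 : ∑ j : Fin r, B s j * d j = 0 := by
        rw [← h5]
        refine Finset.sum_congr rfl fun j _ => ?_
        rw [hB, mul_comm]
      simpa [mulVec, dotProduct] using h6
    have hd0 : d = 0 := by
      have h2 : B⁻¹ *ᵥ (B *ᵥ d) = d := by
        rw [mulVec_mulVec, nonsing_inv_mul _ hBdet, one_mulVec]
      rw [hd2, mulVec_zero] at h2
      exact h2.symm
    rw [hd0] at hd
    have hDz : (col (k+1) - ∑ i : Fin r, φ i • col (k+1-r+i.1)) = 0 := by
      rw [← hd]
      apply Finset.sum_eq_zero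
      intro j _
      simp
    have h7 := hDval ⟨k+1, by omega⟩
    rw [hDz] at h7
    simp only [Pi.zero_apply] at h7
    rw [if_pos trivial] at h7
    exact h7.symm
  · intro hG0
    have hVW : V = W := by
      refine le_antisymm ?_ hWleV
      rw [hVdef, Submodule.span_le]
      rintro x ⟨j, rfl⟩
      exact hcolW j.1 (by have := j.2; omega) (fun _ => hG0)
    rw [hrankV, hVW, hfinW]
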